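/- Let V, W be ℂ-vector spaces and let M = (M₁,...,Mₛ) ∈ Hom(V,W)ˢ with s ≥ 1. If the rank of M is at least s, then there exists a vector v ∈ V such that the vectors M₁v, ..., Mₛv are linearly independent in W (i.e. the span ⟨M₁v,...,Mₛv⟩ has dimension s). -/

import Mathlib

set_option maxRecDepth 8000
open Polynomial Matrix

lemma exists_dual_family {W : Type*} [AddCommGroup W] [Module ℂ W] {n : ℕ}
    {w : Fin n → W} (hw : LinearIndependent ℂ w) :
    ∃ φ : Fin n → (W →ₗ[ℂ] ℂ), ∀ k i, φ k (w i) = if k = i then 1 else 0 := by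
  set S := Submodule.span ℂ (Set.range w) with hS
  obtain ⟨T, hT⟩ := S.exists_isCompl
  let B := Module.Basis.span hw
  refine ⟨fun k => (B.coord k).comp (S.projectionOnto T hT), fun k i => ?_⟩
  have hmem : w i ∈ S := Submodule.subset_span ⟨i, rfl⟩
  have h1 : S.projectionOnto T hT (w i) = ⟨w i, hmem⟩ :=
    Submodule.projectionOnto_apply_left hT ⟨w i, hmem⟩
  have h2 : (⟨w i, hmem⟩ : S) = B i := by
    apply Subtype.ext
    simp [B, Module.Basis.span_apply]
  rw [LinearMap.comp_apply, h1, h2, Module.Basis.coord_apply, Module.Basis.repr_self, Finsupp.single_apply]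
  simp [eq_comm]

lemma sum_coeff_smul_eq_zero {W : Type*} [AddCommGroup W] [Module ℂ W] {ι : Type*} [Fintype ι]
    (q : ι → Polynomial ℂ) (w : ι → W)
    (h : {t : ℂ | ∑ i, (q i).eval t • w i = 0}.Infinite) (n : ℕ) :
    ∑ i, ((q i).coeff n) • w i = 0 := by
  rw [← Module.forall_dual_apply_eq_zero_iff ℂ]
  intro ψ
  have hQ : (∑ i, Polynomial.C (ψ (w i)) * q i) = 0 := by
    apply Polynomial.eq_zero_of_infinite_isRoot
    apply h.mono
    intro t ht
    simp only [Set.mem_setOf_eq] at ht ⊢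
    have : ψ (∑ i, (q i).eval t • w i) = 0 := by rw [ht]; simp
    simpa [Polynomial.IsRoot, Polynomial.eval_finset_sum, map_sum, _root_.map_smul, smul_eq_mul,
      mul_comm] using this
  have hc := congrArg (fun p => Polynomial.coeff p n) hQ
  simp only [Polynomial.finset_sum_coeff, Polynomial.coeff_C_mul, Polynomial.coeff_zero] at hc
  rw [map_sum]
  simpa [_root_.map_smul, smul_eq_mul, mul_comm] using hc

theorem aux {V W : Type*} [AddCommGroup V] [Module ℂ V] [AddCommGroup W] [Module ℂ W] :
    ∀ (s : ℕ) (M : Fin s → (V →ₗ[ℂ] W)),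
    (∀ lam : Fin s → ℂ, lam ≠ 0 → (s : Cardinal) ≤ LinearMap.rank (∑ i, lam i • M i)) →
    ∃ v : V, LinearIndependent ℂ (fun i : Fin s => M i v)
  | 0, M, _ => ⟨0, linearIndependent_empty_type⟩
  | (s+1), M, hM => by
    obtain ⟨v₀, hv₀⟩ := aux s (fun i => M i.castSucc) (fun lam hlam => by
      have h1 : (Fin.snoc lam 0 : Fin (s+1) → ℂ) ≠ 0 := by
        intro h
        apply hlam
        funext i
        have := congrFun h i.castSucc
        simpa [Fin.snoc_castSucc] using this
      have h2 := hM (Fin.snoc lam 0) h1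
      have h3 : (∑ i : Fin (s+1), (Fin.snoc lam 0 : Fin (s+1) → ℂ) i • M i)
          = ∑ i : Fin s, lam i • M i.castSucc := by
        rw [Fin.sum_univ_castSucc]
        simp [Fin.snoc_castSucc, Fin.snoc_last]
      rw [h3] at h2
      exact le_trans (by exact_mod_cast Nat.cast_le.mpr (Nat.le_succ s)) h2)
    by_contra hcon
    push_neg at hcon
    obtain ⟨φ, hφ⟩ := exists_dual_family hv₀
    -- expressing the last map through the first s ones at points of independence
    have hlastcoef : ∀ (v : V), LinearIndependent ℂ (fun i : Fin s => M i.castSucc v) →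
        ∃ c : Fin s → ℂ, M (Fin.last s) v = ∑ i, c i • M i.castSucc v := by
      intro v hind
      obtain ⟨ν, hν0, i₀, hi₀⟩ := Fintype.not_linearIndependent_iff.mp (hcon v)
      rw [Fin.sum_univ_castSucc] at hν0
      have hνlast : ν (Fin.last s) ≠ 0 := by
        intro h0
        rw [h0, zero_smul, add_zero] at hν0
        have hz := Fintype.linearIndependent_iff.mp hind (fun i => ν i.castSucc) hν0
        rcases Fin.eq_castSucc_or_eq_last i₀ with ⟨j, rfl⟩ | rfl
        · exact hi₀ (hz j)
        · exact hi₀ h0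
      refine ⟨fun i => -(ν (Fin.last s))⁻¹ * ν i.castSucc, ?_⟩
      have h1 : ν (Fin.last s) • M (Fin.last s) v
          = -(∑ i : Fin s, ν i.castSucc • M i.castSucc v) :=
        eq_neg_of_add_eq_zero_right hν0
      have h2 : M (Fin.last s) v
          = (-(ν (Fin.last s))⁻¹) • ∑ i : Fin s, ν i.castSucc • M i.castSucc v := by
        calc M (Fin.last s) v
            = (ν (Fin.last s))⁻¹ • (ν (Fin.last s) • M (Fin.last s) v) := by
              rw [smul_smul, inv_mul_cancel₀ hνlast, one_smul]
          _ = (ν (Fin.last s))⁻¹ • -(∑ i : Fin s, ν i.castSucc • M i.castSucc v) := by rw [h1]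
          _ = (-(ν (Fin.last s))⁻¹) • ∑ i : Fin s, ν i.castSucc • M i.castSucc v := by
              rw [smul_neg, ← neg_smul]
      rw [h2, Finset.smul_sum]
      exact Finset.sum_congr rfl fun i _ => by rw [smul_smul]
    set W₀ := Submodule.span ℂ (Set.range fun i : Fin s => M i.castSucc v₀) with hW₀
    set μ : Fin (s+1) → ℂ := Fin.snoc (fun i => -(φ i (M (Fin.last s) v₀))) 1 with hμ
    have hMv₀mem : ∀ i : Fin (s+1), M i v₀ ∈ W₀ := by
      intro i
      rcases Fin.eq_castSucc_or_eq_last i with ⟨j, rfl⟩ | rfl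
      · exact Submodule.subset_span ⟨j, rfl⟩
      · obtain ⟨c, hc⟩ := hlastcoef v₀ hv₀
        rw [hc]
        exact Submodule.sum_mem _ fun i _ =>
          Submodule.smul_mem _ _ (Submodule.subset_span ⟨i, rfl⟩)
    have hmem : ∀ u : V, (∑ i : Fin (s+1), μ i • M i u) ∈ W₀ := by
      intro u
      set A : Matrix (Fin s) (Fin s) ℂ[X] :=
        Matrix.of fun k i => C (φ k (M i.castSucc v₀)) + C (φ k (M i.castSucc u)) * X with hA
      set b : Fin s → ℂ[X] :=
        fun k => C (φ k (M (Fin.last s) v₀)) + C (φ k (M (Fin.last s) u)) * X with hb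
      set g : Fin s → ℂ[X] := A.adjugate *ᵥ b with hg
      set G : Fin (s+1) → ℂ[X] := Fin.snoc (fun i => -(g i)) A.det with hG
      have hAeval : ∀ (t : ℂ) k i, eval t (A k i) = φ k (M i.castSucc (v₀ + t • u)) := by
        intro t k i
        rw [hA]
        simp only [Matrix.of_apply, eval_add, eval_mul, eval_C, eval_X, map_add,
          _root_.map_smul, smul_eq_mul]
        ring
      have hbeval : ∀ (t : ℂ) k, eval t (b k) = φ k (M (Fin.last s) (v₀ + t • u)) := by
        intro t k
        rw [hb]
        simp only [eval_add, eval_mul, eval_C, eval_X, map_add,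
          _root_.map_smul, smul_eq_mul]
        ring
      have hmapA : ∀ t : ℂ, A.map (eval t) = Matrix.of fun k i => φ k (M i.castSucc (v₀ + t • u)) := by
        intro t; ext k i; simp [Matrix.map_apply, hAeval t k i]
      have hA0 : A.map (eval 0) = (1 : Matrix (Fin s) (Fin s) ℂ) := by
        rw [hmapA 0]; ext k i
        simp [Matrix.one_apply, hφ k i]
      have hdetmap : ∀ t : ℂ, (A.map (eval t)).det = eval t A.det := by
        intro t
        have := RingHom.map_det (evalRingHom t) A
        simpa [coe_evalRingHom] using this.symm
      have hdet0 : eval 0 A.det = 1 := by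
        rw [← hdetmap 0, hA0, Matrix.det_one]
      have hdne : A.det ≠ 0 := by
        intro h; rw [h] at hdet0; simp at hdet0
      have hgeval : ∀ t : ℂ, (fun i => eval t (g i))
          = (A.map (eval t)).adjugate *ᵥ (fun k => eval t (b k)) := by
        intro t
        funext i
        have hadj : (A.map (eval t)).adjugate = A.adjugate.map (eval t) := by
          have := RingHom.map_adjugate (evalRingHom t) A
          simpa [coe_evalRingHom] using this.symm
        rw [hadj]
        simp [hg, Matrix.mulVec, dotProduct, map_sum, Matrix.map_apply,
          eval_finset_sum, eval_mul]
      have hkey : ∀ t : ℂ, eval t A.det ≠ 0 →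
          ∑ i : Fin (s+1), eval t (G i) • M i (v₀ + t • u) = 0 := by
        intro t ht
        set vt := v₀ + t • u with hvt
        set At := A.map (eval t) with hAt
        have hunit : IsUnit At.det := by
          rw [hAt, hdetmap t]; exact isUnit_iff_ne_zero.mpr ht
        have hind : LinearIndependent ℂ (fun i : Fin s => M i.castSucc vt) := by
          rw [Fintype.linearIndependent_iff]
          intro x hx
          have hmul : At *ᵥ x = 0 := by
            funext k
            have hψ : φ k (∑ i, x i • M i.castSucc vt) = 0 := by rw [hx]; simp
            rw [hvt] at hψ
            simp only [map_sum, _root_.map_smul, smul_eq_mul, map_add] at hψ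
            simpa [hAt, Matrix.mulVec, dotProduct, hmapA t, map_add,
              _root_.map_smul, smul_eq_mul, mul_comm] using hψ
          have hx0 : x = 0 := by
            have h2 := congrArg (fun y => At⁻¹ *ᵥ y) hmul
            simpa [Matrix.mulVec_mulVec, Matrix.nonsing_inv_mul At hunit,
              Matrix.mulVec_zero, Matrix.one_mulVec] using h2
          exact fun i => congrFun hx0 i
        obtain ⟨c, hc⟩ := hlastcoef vt hind
        have hbt : At *ᵥ c = fun k => eval t (b k) := by
          funext k
          have hψ := congrArg (φ k) hc
          simp only [map_sum, _root_.map_smul, smul_eq_mul] at hψ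
          have hAtapp : ∀ i, At k i = φ k (M i.castSucc vt) := by
            intro i
            rw [hAt, hmapA t, ← hvt]
            rfl
          calc (At *ᵥ c) k = ∑ i, At k i * c i := by
                simp [Matrix.mulVec, dotProduct]
            _ = ∑ i, c i * φ k (M i.castSucc vt) := by
                refine Finset.sum_congr rfl fun i _ => ?_
                rw [hAtapp i, mul_comm]
            _ = φ k (M (Fin.last s) vt) := hψ.symm
            _ = eval t (b k) := by rw [hbeval t k, ← hvt]
        have hgv : ∀ i, eval t (g i) = eval t A.det * c i := by
          intro i
          have h1 : (fun i => eval t (g i)) = At.adjugate *ᵥ (At *ᵥ c) := by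
            rw [hbt]; exact hgeval t
          have h2 : At.adjugate *ᵥ (At *ᵥ c) = At.det • c := by
            rw [Matrix.mulVec_mulVec, Matrix.adjugate_mul, Matrix.smul_mulVec,
              Matrix.one_mulVec]
          have h3 := congrFun (h1.trans h2) i
          simpa [hAt, hdetmap t] using h3
        rw [Fin.sum_univ_castSucc]
        have hGc : ∀ i : Fin s, G i.castSucc = -(g i) := fun i => by
          rw [hG, Fin.snoc_castSucc]
        have hGl : G (Fin.last s) = A.det := by rw [hG, Fin.snoc_last]
        rw [hGl, hc, Finset.smul_sum]
        rw [← Finset.sum_add_distrib]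
        refine Finset.sum_eq_zero fun i _ => ?_
        rw [hGc i, eval_neg, hgv i, smul_smul, neg_smul, neg_add_cancel]
      -- infinitely many good t
      have hInf : {t : ℂ | ∑ j : (Fin (s+1)) ⊕ (Fin (s+1)),
          ((Sum.elim G (fun i => G i * X)) j).eval t •
            (Sum.elim (fun i : Fin (s+1) => M i v₀) (fun i : Fin (s+1) => M i u)) j = 0}.Infinite := by
        have hfin : {t : ℂ | A.det.IsRoot t}.Finite := Polynomial.finite_setOf_isRoot hdne
        refine Set.Infinite.mono ?_ hfin.infinite_compl
        intro t ht
        simp only [Set.mem_compl_iff, Set.mem_setOf_eq, Polynomial.IsRoot] at ht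
        have hk := hkey t ht
        simp only [Set.mem_setOf_eq, Fintype.sum_sum_type, Sum.elim_inl, Sum.elim_inr]
        have hsplit : ∀ i : Fin (s+1), eval t (G i) • M i (v₀ + t • u)
            = eval t (G i) • M i v₀ + eval t (G i * X) • M i u := by
          intro i
          rw [map_add, _root_.map_smul, smul_add, eval_mul, eval_X, mul_comm,
            mul_smul, smul_comm]
        calc (∑ i : Fin (s+1), eval t (G i) • M i v₀)
              + ∑ i : Fin (s+1), eval t (G i * X) • M i u
            = ∑ i : Fin (s+1), (eval t (G i) • M i v₀ + eval t (G i * X) • M i u) :=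
              Finset.sum_add_distrib.symm
          _ = ∑ i : Fin (s+1), eval t (G i) • M i (v₀ + t • u) :=
              Finset.sum_congr rfl fun i _ => (hsplit i).symm
          _ = 0 := hk
      have hco := sum_coeff_smul_eq_zero (Sum.elim G (fun i => G i * X))
        (Sum.elim (fun i : Fin (s+1) => M i v₀) (fun i : Fin (s+1) => M i u)) hInf 1
      rw [Fintype.sum_sum_type] at hco
      simp only [Sum.elim_inl, Sum.elim_inr, Polynomial.coeff_mul_X] at hco
      -- identify the constant coefficients with μ
      have hcoeff0 : ∀ i : Fin (s+1), (G i).coeff 0 = μ i := by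
        intro i
        rcases Fin.eq_castSucc_or_eq_last i with ⟨j, rfl⟩ | rfl
        · rw [hG, Fin.snoc_castSucc, hμ, Fin.snoc_castSucc]
          rw [Polynomial.coeff_neg, Polynomial.coeff_zero_eq_eval_zero]
          have h1 := congrFun (hgeval 0) j
          rw [hA0, Matrix.adjugate_one, Matrix.one_mulVec] at h1
          rw [h1, hbeval 0 j]
          simp
        · rw [hG, Fin.snoc_last, hμ, Fin.snoc_last, Polynomial.coeff_zero_eq_eval_zero, hdet0]
      have hfinal : ∑ i : Fin (s+1), μ i • M i u
          = -∑ i : Fin (s+1), (G i).coeff 1 • M i v₀ := by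
        have h2 : ∑ i : Fin (s+1), (G i).coeff 0 • M i u = ∑ i : Fin (s+1), μ i • M i u := by
          exact Finset.sum_congr rfl fun i _ => by rw [hcoeff0 i]
        rw [h2, add_comm] at hco
        exact eq_neg_of_add_eq_zero_left hco
      rw [hfinal]
      exact Submodule.neg_mem _ (Submodule.sum_mem _ fun i _ =>
        Submodule.smul_mem _ _ (hMv₀mem i))
    -- conclude
    have hμ0 : μ ≠ 0 := by
      intro h
      have := congrFun h (Fin.last s)
      rw [hμ] at this
      simp [Fin.snoc_last] at this
    have hrank := hM μ hμ0
    set N := ∑ i : Fin (s+1), μ i • M i with hN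
    have hrange : LinearMap.range N ≤ W₀ := by
      rintro x ⟨u, rfl⟩
      have hNu : N u = ∑ i : Fin (s+1), μ i • M i u := by
        rw [hN]
        simp [LinearMap.sum_apply, LinearMap.smul_apply]
      rw [hNu]
      exact hmem u
    have h1 : LinearMap.rank N ≤ Module.rank ℂ W₀ := by
      rw [LinearMap.rank]
      exact Submodule.rank_mono hrange
    have h2 : Module.rank ℂ W₀ ≤ (s : Cardinal) := by
      refine le_trans (rank_span_le _) ?_
      have := Cardinal.mk_range_le_lift (f := fun i : Fin s => M i.castSucc v₀)
      simpa using this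
    have hfin : ((s+1 : ℕ) : Cardinal) ≤ ((s : ℕ) : Cardinal) :=
      le_trans hrank (le_trans h1 h2)
    have := Nat.cast_le.mp hfin
    omega


/-- If a tuple `M = (M₁,...,Mₛ)` of linear maps `V → W` has rank at least `s`
(every nonzero linear combination has rank at least `s`), then there is a
vector `v ∈ V` such that `M₁ v, ..., Mₛ v` are linearly independent. -/
theorem exists_vector_linearIndependent {V W : Type*}
    [AddCommGroup V] [Module ℂ V] [AddCommGroup W] [Module ℂ W] {s : ℕ}
    (hs : 0 < s) (M : Fin s → (V →ₗ[ℂ] W))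
    (hM : ∀ lam : Fin s → ℂ, lam ≠ 0 →
      (s : Cardinal) ≤ LinearMap.rank (∑ i, lam i • M i)) :
    ∃ v : V, LinearIndependent ℂ (fun i : Fin s => M i v) := by
  exact aux s M hM
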